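/- For all integers r ≥ 1 and m ≥ 1 and every real Δ ≥ 0, setting C = r(r−1)/2, M = m + C + Δ, and f(k) = 1 + C + Δ + r·k − r, the following inequality holds: ∑_{k=1}^{m−1} (1/f(k)) · (ln(M + r·k − r) − ln f(k))^{r−1} ≥ (1/r²) · (ln M − ln(1 + C + Δ))^{r}. -/

import Mathlib

/-- Auxiliary: for `0 ≤ y ≤ x`, `x^n - y^n ≤ n·x^(n-1)·(x-y)`. -/
lemma pow_sub_pow_le_aux (x y : ℝ) (n : ℕ) (hy : 0 ≤ y) (hxy : y ≤ x) :
    x ^ n - y ^ n ≤ (n : ℝ) * x ^ (n - 1) * (x - y) := by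
  have hx : 0 ≤ x := hy.trans hxy
  rcases Nat.eq_zero_or_pos n with hn | hn
  · simp [hn]
  · have hgeom := geom_sum₂_mul x y n
    have hS : (∑ i ∈ Finset.range n, x ^ i * y ^ (n - 1 - i)) ≤ (n : ℝ) * x ^ (n - 1) := by
      calc (∑ i ∈ Finset.range n, x ^ i * y ^ (n - 1 - i))
          ≤ ∑ _i ∈ Finset.range n, x ^ (n - 1) := by
            apply Finset.sum_le_sum
            intro i hi
            have hi' : i < n := Finset.mem_range.mp hi
            calc x ^ i * y ^ (n - 1 - i) ≤ x ^ i * x ^ (n - 1 - i) := by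
                  apply mul_le_mul_of_nonneg_left _ (pow_nonneg hx i)
                  exact pow_le_pow_left₀ hy hxy _
              _ = x ^ (n - 1) := by rw [← pow_add]; congr 1; omega
        _ = (n : ℝ) * x ^ (n - 1) := by
            rw [Finset.sum_const, Finset.card_range, nsmul_eq_mul]
    calc x ^ n - y ^ n = (∑ i ∈ Finset.range n, x ^ i * y ^ (n - 1 - i)) * (x - y) := hgeom.symm
      _ ≤ ((n : ℝ) * x ^ (n - 1)) * (x - y) :=
          mul_le_mul_of_nonneg_right hS (sub_nonneg.mpr hxy)

/-- the sum-versus-integral estimate used in the inductive lower bound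
for the augmented pivoting process: with `C = r(r−1)/2`, `M = m + C + Δ` and
`f(k) = 1 + C + Δ + rk − r`, one has
`∑_{k=1}^{m−1} (1/f(k)) (ln(M + rk − r) − ln f(k))^{r−1} ≥ (1/r²)(ln M − ln(1+C+Δ))^r`. -/
theorem sum_log_estimate_augmented
    (r m : ℕ) (hr : 1 ≤ r) (hm : 1 ≤ m) (Δ : ℝ) (hΔ : 0 ≤ Δ)
    (C M : ℝ) (f : ℕ → ℝ)
    (hC : C = (r : ℝ) * ((r : ℝ) - 1) / 2)
    (hM : M = (m : ℝ) + C + Δ)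
    (hf : ∀ k : ℕ, f k = 1 + C + Δ + (r : ℝ) * (k : ℝ) - (r : ℝ)) :
    (1 / (r : ℝ) ^ 2) * (Real.log M - Real.log (1 + C + Δ)) ^ r ≤
      ∑ k ∈ Finset.Icc 1 (m - 1),
        (1 / f k) *
          (Real.log (M + (r : ℝ) * (k : ℝ) - (r : ℝ)) - Real.log (f k)) ^ (r - 1) := by
  have hr1 : (1 : ℝ) ≤ (r : ℝ) := by exact_mod_cast hr
  have hm1 : (1 : ℝ) ≤ (m : ℝ) := by exact_mod_cast hm
  have hC0 : 0 ≤ C := by rw [hC]; nlinarith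
  set a : ℝ := 1 + C + Δ with ha
  have ha1 : (1 : ℝ) ≤ a := by simp only [ha]; linarith
  have ha0 : 0 < a := by linarith
  have hMa : a ≤ M := by rw [hM]; simp only [ha]; linarith
  have hM0 : 0 < M := lt_of_lt_of_le ha0 hMa
  -- basic facts about f
  have hfa : ∀ k : ℕ, 1 ≤ k → a ≤ f k := by
    intro k hk
    have hk1 : (1 : ℝ) ≤ (k : ℝ) := by exact_mod_cast hk
    rw [hf k]; simp only [ha]; nlinarith
  have hfpos : ∀ k : ℕ, 1 ≤ k → 0 < f k := fun k hk => lt_of_lt_of_le ha0 (hfa k hk)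
  have hstep : ∀ k : ℕ, f (k + 1) = f k + (r : ℝ) := by
    intro k; rw [hf, hf]; push_cast; ring
  -- the potential
  set p : ℕ → ℝ := fun k => max (Real.log M - Real.log (f k)) 0 with hp
  have hp0 : ∀ k, 0 ≤ p k := fun k => le_max_right _ _
  have hpmono : ∀ k : ℕ, 1 ≤ k → p (k + 1) ≤ p k := by
    intro k hk
    apply max_le_max _ le_rfl
    have : f k ≤ f (k + 1) := by rw [hstep]; linarith
    have := Real.log_le_log (hfpos k hk) this
    linarith
  have hf1 : f 1 = a := by rw [hf]; simp only [ha]; push_cast; ring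
  have hp1 : p 1 = Real.log M - Real.log a := by
    simp only [hp, hf1]
    exact max_eq_left (by have := Real.log_le_log ha0 hMa; linarith)
  have hpm : p m = 0 := by
    simp only [hp]
    apply max_eq_right
    have hMfm : M ≤ f m := by
      rw [hf, hM]; simp only [ha]; nlinarith
    have := Real.log_le_log hM0 hMfm
    linarith
  -- the key per-term estimate
  have key : ∀ k : ℕ, 1 ≤ k →
      p k ^ r - p (k + 1) ^ r ≤
        (r : ℝ) ^ 2 * ((1 / f k) *
          (Real.log (M + (r : ℝ) * (k : ℝ) - (r : ℝ)) - Real.log (f k)) ^ (r - 1)) := by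
    intro k hk
    have hk1 : (1 : ℝ) ≤ (k : ℝ) := by exact_mod_cast hk
    have hfk : 0 < f k := hfpos k hk
    have hfk1 : 0 < f (k + 1) := hfpos (k + 1) (by omega)
    set h : ℝ := Real.log (M + (r : ℝ) * (k : ℝ) - (r : ℝ)) - Real.log (f k) with hh
    have hMk0 : 0 < M + (r : ℝ) * (k : ℝ) - (r : ℝ) := by nlinarith
    have hfkM : f k ≤ M + (r : ℝ) * (k : ℝ) - (r : ℝ) := by
      rw [hf, hM]; simp only [ha]; linarith
    have hh0 : 0 ≤ h := by
      have := Real.log_le_log hfk hfkM; simp only [hh]; linarith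
    have hMle : M ≤ M + (r : ℝ) * (k : ℝ) - (r : ℝ) := by nlinarith
    have hxh : p k ≤ h := by
      apply max_le _ hh0
      have := Real.log_le_log hM0 hMle
      simp only [hh]; linarith
    have hsub : p k - p (k + 1) ≤ (r : ℝ) / f k := by
      have hlog : Real.log (f (k + 1)) - Real.log (f k) ≤ (r : ℝ) / f k := by
        rw [← Real.log_div (ne_of_gt hfk1) (ne_of_gt hfk)]
        have h1 : f (k + 1) / f k - 1 = (r : ℝ) / f k := by
          field_simp [hstep k]
          linarith [hstep k]
        have := Real.log_le_sub_one_of_pos (div_pos hfk1 hfk)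
        linarith
      rcases le_or_gt (Real.log M - Real.log (f k)) 0 with hcase | hcase
      · have : p k = 0 := max_eq_right hcase
        rw [this]
        have := hp0 (k + 1)
        have : 0 ≤ (r : ℝ) / f k := by positivity
        linarith [hp0 (k + 1)]
      · have hpk : p k = Real.log M - Real.log (f k) := max_eq_left (le_of_lt hcase)
        have hpk1 : Real.log M - Real.log (f (k + 1)) ≤ p (k + 1) := le_max_left _ _
        rw [hpk]
        linarith
    have hmain : p k ^ r - p (k + 1) ^ r ≤ (r : ℝ) * p k ^ (r - 1) * (p k - p (k + 1)) :=
      pow_sub_pow_le_aux _ _ r (hp0 _) (hpmono k hk)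
    have hb : p k ^ (r - 1) * (p k - p (k + 1)) ≤ h ^ (r - 1) * ((r : ℝ) / f k) := by
      apply mul_le_mul (pow_le_pow_left₀ (hp0 k) hxh _) hsub
        (sub_nonneg.mpr (hpmono k hk)) (pow_nonneg hh0 _)
    calc p k ^ r - p (k + 1) ^ r ≤ (r : ℝ) * p k ^ (r - 1) * (p k - p (k + 1)) := hmain
      _ = (r : ℝ) * (p k ^ (r - 1) * (p k - p (k + 1))) := by ring
      _ ≤ (r : ℝ) * (h ^ (r - 1) * ((r : ℝ) / f k)) := by
          apply mul_le_mul_of_nonneg_left hb (by linarith)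
      _ = (r : ℝ) ^ 2 * ((1 / f k) * h ^ (r - 1)) := by
          field_simp
  -- telescoping
  have htel : ∑ i ∈ Finset.range (m - 1), (p (1 + i) ^ r - p (1 + i + 1) ^ r)
      = p 1 ^ r - p m ^ r := by
    have := Finset.sum_range_sub' (fun i => p (1 + i) ^ r) (m - 1)
    simpa [show 1 + (m - 1) = m by omega, add_assoc] using this
  have hr2pos : (0 : ℝ) < (r : ℝ) ^ 2 := by positivity
  have hIcc : ∑ k ∈ Finset.Icc 1 (m - 1),
        (1 / f k) *
          (Real.log (M + (r : ℝ) * (k : ℝ) - (r : ℝ)) - Real.log (f k)) ^ (r - 1)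
      = ∑ i ∈ Finset.range (m - 1),
        (1 / f (1 + i)) *
          (Real.log (M + (r : ℝ) * ((1 + i : ℕ) : ℝ) - (r : ℝ)) - Real.log (f (1 + i))) ^ (r - 1) := by
    rw [show Finset.Icc 1 (m - 1) = Finset.Ico 1 m by
          rw [← Finset.Ico_add_one_right_eq_Icc]; congr 1; omega]
    rw [Finset.sum_Ico_eq_sum_range]
  rw [hIcc]
  calc (1 / (r : ℝ) ^ 2) * (Real.log M - Real.log a) ^ r
      = (1 / (r : ℝ) ^ 2) * ∑ i ∈ Finset.range (m - 1), (p (1 + i) ^ r - p (1 + i + 1) ^ r) := by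
        rw [htel, hp1, hpm, zero_pow (by omega : r ≠ 0), sub_zero]
    _ ≤ ∑ i ∈ Finset.range (m - 1),
        (1 / f (1 + i)) *
          (Real.log (M + (r : ℝ) * ((1 + i : ℕ) : ℝ) - (r : ℝ)) - Real.log (f (1 + i))) ^ (r - 1) := by
        rw [Finset.mul_sum]
        apply Finset.sum_le_sum
        intro i _
        have hkey := key (1 + i) (by omega)
        have hpos : (0:ℝ) ≤ 1 / (r:ℝ)^2 := by positivity
        have h2 := mul_le_mul_of_nonneg_left hkey hpos
        refine h2.trans_eq ?_
        rw [← mul_assoc, one_div, inv_mul_cancel₀ (ne_of_gt hr2pos), one_mul]
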